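/- Let V be a finite-dimensional ℚ-vector space and let n₁, n₂ be natural numbers with n₁ + n₂ < dim V. Let M be a representation of Σ := S_{n₁} × S_{n₂} over ℚ, and set W := M ⊗ V^{⊗n₁} ⊗ (V*)^{⊗n₂}, where Σ acts diagonally via its action on M and by permuting the respective tensor factors, and GL(V) acts trivially on M, diagonally on the tensor powers, and on the dual space V* by g·φ = φ∘g⁻¹ (the actions of Σ and GL(V) commute). Then the canonical surjection W_{Σ × SL(V)} → W_{Σ × GL(V)} between coinvariant spaces is an isomorphism; equivalently, the SL(V)-coinvariants of M ⊗_Σ (V^{⊗n₁} ⊗ (V*)^{⊗n₂}) map isomorphically onto its GL(V)-coinvariants. -/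

import Mathlib

open scoped TensorProduct

local notation "MP(" V ", " n₁ ", " n₂ ")" =>
  ((⨂[ℚ] (_ : Fin n₁), V) ⊗[ℚ] (⨂[ℚ] (_ : Fin n₂), Module.Dual ℚ V))

noncomputable instance instMixedACG (V : Type) [AddCommGroup V] [Module ℚ V]
    (M : Type) [AddCommGroup M] [Module ℚ M] (n₁ n₂ : ℕ) :
    AddCommGroup (M ⊗[ℚ] MP(V, n₁, n₂)) :=
  Module.addCommMonoidToAddCommGroup ℚ

section Actions

variable (V : Type) [AddCommGroup V] [Module ℚ V]

/-- The action of a pair of permutations on `V^{⊗n₁} ⊗ (V*)^{⊗n₂}`, permuting the respective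
tensor factors. -/
noncomputable def permAct (n₁ n₂ : ℕ) (σ : Equiv.Perm (Fin n₁) × Equiv.Perm (Fin n₂)) :
    MP(V, n₁, n₂) →ₗ[ℚ] MP(V, n₁, n₂) :=
  TensorProduct.map
    ((PiTensorProduct.reindex ℚ (fun _ : Fin n₁ => V) σ.1).toLinearMap)
    ((PiTensorProduct.reindex ℚ (fun _ : Fin n₂ => Module.Dual ℚ V) σ.2).toLinearMap)

/-- The diagonal action of `g ∈ GL(V)` on `V^{⊗n₁} ⊗ (V*)^{⊗n₂}`, acting on `V*` by
`g · φ = φ ∘ g⁻¹`. -/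
noncomputable def glAct (n₁ n₂ : ℕ) (g : V ≃ₗ[ℚ] V) :
    MP(V, n₁, n₂) →ₗ[ℚ] MP(V, n₁, n₂) :=
  TensorProduct.map
    (PiTensorProduct.map fun _ => g.toLinearMap)
    (PiTensorProduct.map fun _ => g.symm.dualMap.toLinearMap)

variable (M : Type) [AddCommGroup M] [Module ℚ M] (n₁ n₂ : ℕ)
variable (ρ : Representation ℚ (Equiv.Perm (Fin n₁) × Equiv.Perm (Fin n₂)) M)

/-- The subspace of `Σ × SL(V)`-coinvariance relations in `W = M ⊗ V^{⊗n₁} ⊗ (V*)^{⊗n₂}`,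
where `Σ = S_{n₁} × S_{n₂}` acts diagonally via `ρ` and by permuting tensor factors, and
`SL(V)` acts trivially on `M` and diagonally on the tensor factors. -/
noncomputable def relSigmaSL : Submodule ℚ (M ⊗[ℚ] MP(V, n₁, n₂)) :=
  Submodule.span ℚ
    {y | ∃ (σ : Equiv.Perm (Fin n₁) × Equiv.Perm (Fin n₂)) (g : V ≃ₗ[ℚ] V)
      (z : M ⊗[ℚ] MP(V, n₁, n₂)), LinearMap.det (g : V →ₗ[ℚ] V) = 1 ∧
      y = z - TensorProduct.map (ρ σ) ((glAct V n₁ n₂ g).comp (permAct V n₁ n₂ σ)) z}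

/-- The subspace of `Σ × GL(V)`-coinvariance relations in `W = M ⊗ V^{⊗n₁} ⊗ (V*)^{⊗n₂}`. -/
noncomputable def relSigmaGL : Submodule ℚ (M ⊗[ℚ] MP(V, n₁, n₂)) :=
  Submodule.span ℚ
    {y | ∃ (σ : Equiv.Perm (Fin n₁) × Equiv.Perm (Fin n₂)) (g : V ≃ₗ[ℚ] V)
      (z : M ⊗[ℚ] MP(V, n₁, n₂)),
      y = z - TensorProduct.map (ρ σ) ((glAct V n₁ n₂ g).comp (permAct V n₁ n₂ σ)) z}

lemma relSigmaSL_le_relSigmaGL :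
    relSigmaSL V M n₁ n₂ ρ ≤ (relSigmaGL V M n₁ n₂ ρ).comap (LinearMap.id) :=
  le_trans
    (Submodule.span_mono fun y hy => by
      obtain ⟨σ, g, z, _, hz⟩ := hy
      exact ⟨σ, g, z, hz⟩)
    (le_of_eq (Submodule.comap_id _).symm)

end Actions

section Aux

open scoped Matrix

/-- Key linear-algebra fact: if `n₁ + n₂ < dim V`, then for any vectors `v i`, functionals
`φ j` and nonzero scalar `d`, there is an automorphism of determinant `d` fixing all `v i`
and all `φ j`. -/
lemma exists_det_fix (V : Type) [AddCommGroup V] [Module ℚ V] [FiniteDimensional ℚ V]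
    (n₁ n₂ : ℕ) (h : n₁ + n₂ < Module.finrank ℚ V)
    (v : Fin n₁ → V) (φ : Fin n₂ → Module.Dual ℚ V) (d : ℚ) (hd : d ≠ 0) :
    ∃ f : V ≃ₗ[ℚ] V, LinearMap.det (f : V →ₗ[ℚ] V) = d ∧
      (∀ i, f (v i) = v i) ∧ (∀ j, ∀ x, φ j (f x) = φ j x) := by
  classical
  set P : Submodule ℚ V := Submodule.span ℚ (Set.range v) with hP
  have hJrank : Module.finrank ℚ V ≤
      Module.finrank ℚ (LinearMap.ker (LinearMap.pi φ)) + n₂ := by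
    have h1 := LinearMap.finrank_range_add_finrank_ker (LinearMap.pi φ)
    have hr : Module.finrank ℚ (LinearMap.range (LinearMap.pi φ)) ≤ n₂ := by
      have := Submodule.finrank_le (LinearMap.range (LinearMap.pi φ))
      simpa using this
    omega
  have hPrank : Module.finrank ℚ P ≤ n₁ := by
    simpa [Set.finrank, hP] using finrank_range_le_card (R := ℚ) v
  have hnle : ¬ LinearMap.ker (LinearMap.pi φ) ≤ P := by
    intro hle
    have := Submodule.finrank_mono hle
    omega
  obtain ⟨u, huJ, huP⟩ := SetLike.not_le_iff_exists.1 hnle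
  have hφu : ∀ j, φ j u = 0 := by
    intro j
    have h0 : LinearMap.pi φ u = 0 := huJ
    have := congrFun h0 j
    simpa [LinearMap.pi_apply] using this
  obtain ⟨f₀, hf₀u, hf₀P⟩ := P.exists_dual_map_eq_bot_of_notMem huP inferInstance
  set lam : Module.Dual ℚ V := (f₀ u)⁻¹ • f₀ with hlam
  have hlamu : lam u = 1 := by
    simp [hlam, inv_mul_cancel₀ hf₀u]
  have hlamv : ∀ i, lam (v i) = 0 := by
    intro i
    have hvP : v i ∈ P := Submodule.subset_span ⟨i, rfl⟩
    have : f₀ (v i) = 0 := by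
      have : f₀ (v i) ∈ P.map f₀ := Submodule.mem_map_of_mem hvP
      rw [hf₀P, Submodule.mem_bot] at this; exact this
    simp [hlam, this]
  set F : V →ₗ[ℚ] V := LinearMap.id + (d - 1) • lam.smulRight u with hF
  set G : V →ₗ[ℚ] V := LinearMap.id + (d⁻¹ - 1) • lam.smulRight u with hG
  have hFapp : ∀ x, F x = x + (d - 1) • lam x • u := by
    intro x; simp [hF, LinearMap.smulRight_apply, smul_smul, mul_comm]
  have hGapp : ∀ x, G x = x + (d⁻¹ - 1) • lam x • u := by
    intro x; simp [hG, LinearMap.smulRight_apply, smul_smul, mul_comm]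
  have hFG : ∀ x, F (G x) = x := by
    intro x
    rw [hGapp, hFapp]
    rw [map_add, map_smul, map_smul, hlamu]
    match_scalars <;> simp <;> field_simp <;> ring
  have hGF : ∀ x, G (F x) = x := by
    intro x
    rw [hFapp, hGapp]
    rw [map_add, map_smul, map_smul, hlamu]
    match_scalars <;> field_simp <;> ring
  have hdet : LinearMap.det F = d := by
    set b := Module.finBasis ℚ V with hb
    rw [← LinearMap.det_toMatrix b]
    have hm : LinearMap.toMatrix b b F
        = 1 + Matrix.replicateCol Unit (fun i => (d - 1) * b.repr u i)
            * Matrix.replicateRow Unit (fun j => lam (b j)) := by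
      ext i j
      simp [hF, LinearMap.toMatrix_apply, Matrix.one_apply, Matrix.mul_apply,
        Module.Basis.repr_self, Finsupp.single_apply, eq_comm, mul_comm, mul_assoc, mul_left_comm,
        LinearMap.smulRight_apply]
    rw [hm, Matrix.det_one_add_replicateCol_mul_replicateRow]
    have : dotProduct (fun j => lam (b j)) (fun i => (d - 1) * b.repr u i)
        = (d - 1) * lam u := by
      simp only [dotProduct]
      rw [show (d - 1) * lam u = (d - 1) * lam (∑ i, b.repr u i • b i) by rw [Module.Basis.sum_repr]]
      rw [map_sum, Finset.mul_sum]
      congr 1; ext i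
      simp [mul_comm, mul_left_comm]
    rw [this, hlamu]
    ring
  refine ⟨LinearEquiv.ofLinear F G (by ext x; simp [hFG x]) (by ext x; simp [hGF x]), ?_, ?_, ?_⟩
  · simpa using hdet
  · intro i
    show F (v i) = v i
    rw [hFapp, hlamv i]; simp
  · intro j x
    show φ j (F x) = φ j x
    rw [hFapp]
    simp [hφu j]

variable (V : Type) [AddCommGroup V] [Module ℚ V] (n₁ n₂ : ℕ)

lemma glAct_one : glAct V n₁ n₂ (LinearEquiv.refl ℚ V) = LinearMap.id := by
  unfold glAct
  have h1 : (fun _ : Fin n₁ => (LinearEquiv.refl ℚ V).toLinearMap)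
      = fun _ : Fin n₁ => (LinearMap.id : V →ₗ[ℚ] V) := rfl
  have h2 : (fun _ : Fin n₂ => (LinearEquiv.refl ℚ V).symm.dualMap.toLinearMap)
      = fun _ : Fin n₂ => (LinearMap.id : Module.Dual ℚ V →ₗ[ℚ] Module.Dual ℚ V) := by
    funext _
    ext x y
    simp
  rw [h1, h2, PiTensorProduct.map_id, PiTensorProduct.map_id, TensorProduct.map_id]

lemma glAct_comp (e₁ e₂ : V ≃ₗ[ℚ] V) :
    glAct V n₁ n₂ (e₁.trans e₂) = (glAct V n₁ n₂ e₂).comp (glAct V n₁ n₂ e₁) := by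
  unfold glAct
  rw [← TensorProduct.map_comp, ← PiTensorProduct.map_comp, ← PiTensorProduct.map_comp]
  congr 1

lemma permAct_one : permAct V n₁ n₂ 1 = LinearMap.id := by
  unfold permAct
  rw [show ((1 : Equiv.Perm (Fin n₁) × Equiv.Perm (Fin n₂)).1) = Equiv.refl (Fin n₁) from rfl,
    show ((1 : Equiv.Perm (Fin n₁) × Equiv.Perm (Fin n₂)).2) = Equiv.refl (Fin n₂) from rfl,
    PiTensorProduct.reindex_refl, PiTensorProduct.reindex_refl]
  simp [TensorProduct.map_id]

variable (M : Type) [AddCommGroup M] [Module ℚ M]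
variable (ρ : Representation ℚ (Equiv.Perm (Fin n₁) × Equiv.Perm (Fin n₂)) M)

lemma sub_glAct_mem_relSigmaSL [FiniteDimensional ℚ V]
    (h : n₁ + n₂ < Module.finrank ℚ V) (g : V ≃ₗ[ℚ] V) (z : M ⊗[ℚ] MP(V, n₁, n₂)) :
    z - TensorProduct.map LinearMap.id (glAct V n₁ n₂ g) z ∈ relSigmaSL V M n₁ n₂ ρ := by
  classical
  have gen : ∀ (k : V ≃ₗ[ℚ] V), LinearMap.det (k : V →ₗ[ℚ] V) = 1 →
      ∀ w : M ⊗[ℚ] MP(V, n₁, n₂),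
      w - TensorProduct.map LinearMap.id (glAct V n₁ n₂ k) w ∈ relSigmaSL V M n₁ n₂ ρ := by
    intro k hk w
    apply Submodule.subset_span
    refine ⟨1, k, w, hk, ?_⟩
    rw [map_one, permAct_one, LinearMap.comp_id, Module.End.one_eq_id]
  set L : (M ⊗[ℚ] MP(V, n₁, n₂)) →ₗ[ℚ] (M ⊗[ℚ] MP(V, n₁, n₂)) :=
    LinearMap.id - TensorProduct.map LinearMap.id (glAct V n₁ n₂ g) with hL
  have hLapp : ∀ w, L w = w - TensorProduct.map LinearMap.id (glAct V n₁ n₂ g) w := by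
    intro w; simp [hL]
  set S : Submodule ℚ (M ⊗[ℚ] MP(V, n₁, n₂)) := (relSigmaSL V M n₁ n₂ ρ).comap L with hS
  suffices hall : ∀ w, w ∈ S by
    have := hall z
    rwa [hS, Submodule.mem_comap, hLapp] at this
  intro w
  induction w using TensorProduct.induction_on with
  | zero => exact S.zero_mem
  | add a b ha hb => exact S.add_mem ha hb
  | tmul m x =>
    induction x using TensorProduct.induction_on with
    | zero => simpa using S.zero_mem
    | add a b ha hb =>
      have : m ⊗ₜ[ℚ] (a + b) = m ⊗ₜ[ℚ] a + m ⊗ₜ[ℚ] b := TensorProduct.tmul_add m a b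
      rw [this]
      exact S.add_mem ha hb
    | tmul a c =>
      induction a using PiTensorProduct.induction_on with
      | smul_tprod r v =>
        have hsm : m ⊗ₜ[ℚ] ((r • PiTensorProduct.tprod ℚ v) ⊗ₜ[ℚ] c)
            = r • (m ⊗ₜ[ℚ] ((PiTensorProduct.tprod ℚ v) ⊗ₜ[ℚ] c)) := by
          rw [← TensorProduct.smul_tmul', TensorProduct.tmul_smul]
        rw [hsm]
        refine S.smul_mem r ?_
        clear hsm
        induction c using PiTensorProduct.induction_on with
        | smul_tprod s φ =>
          have hsm2 : (PiTensorProduct.tprod ℚ v) ⊗ₜ[ℚ] (s • PiTensorProduct.tprod ℚ φ)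
              = s • ((PiTensorProduct.tprod ℚ v) ⊗ₜ[ℚ] (PiTensorProduct.tprod ℚ φ)) :=
            TensorProduct.tmul_smul s _ _
          rw [hsm2, TensorProduct.tmul_smul]
          refine S.smul_mem s ?_
          -- pure tensor case
          obtain ⟨f, hfdet, hfv, hfφ⟩ := exists_det_fix V n₁ n₂ h v φ
            (LinearMap.det (g : V →ₗ[ℚ] V)) g.isUnit_det'.ne_zero
          set k : V ≃ₗ[ℚ] V := f.symm.trans g with hk
          have hgk : f.trans k = g := by
            ext x; simp [hk]
          have hdetk : LinearMap.det (k : V →ₗ[ℚ] V) = 1 := by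
            have hcoe : (k : V →ₗ[ℚ] V)
                = (g : V →ₗ[ℚ] V).comp (f.symm : V →ₗ[ℚ] V) := rfl
            rw [hcoe, LinearMap.det_comp, LinearEquiv.det_coe_symm, hfdet]
            exact mul_inv_cancel₀ g.isUnit_det'.ne_zero
          have hfix : glAct V n₁ n₂ f
              ((PiTensorProduct.tprod ℚ v) ⊗ₜ[ℚ] (PiTensorProduct.tprod ℚ φ))
              = (PiTensorProduct.tprod ℚ v) ⊗ₜ[ℚ] (PiTensorProduct.tprod ℚ φ) := by
            unfold glAct
            rw [TensorProduct.map_tmul, PiTensorProduct.map_tprod, PiTensorProduct.map_tprod]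
            congr 1
            · congr 1
              funext i
              exact hfv i
            · congr 1
              funext j
              ext x
              have h1 := hfφ j (f.symm x)
              simpa [LinearEquiv.dualMap_apply] using h1.symm
          set w : M ⊗[ℚ] MP(V, n₁, n₂) :=
            m ⊗ₜ[ℚ] ((PiTensorProduct.tprod ℚ v) ⊗ₜ[ℚ] (PiTensorProduct.tprod ℚ φ)) with hw
          have hCgw : TensorProduct.map LinearMap.id (glAct V n₁ n₂ g) w
              = TensorProduct.map LinearMap.id (glAct V n₁ n₂ k) w := by
            rw [← hgk, glAct_comp]
            have hcomp : TensorProduct.map (LinearMap.id : M →ₗ[ℚ] M)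
                ((glAct V n₁ n₂ k).comp (glAct V n₁ n₂ f))
                = (TensorProduct.map LinearMap.id (glAct V n₁ n₂ k)).comp
                  (TensorProduct.map LinearMap.id (glAct V n₁ n₂ f)) := by
              rw [← TensorProduct.map_comp, LinearMap.id_comp]
            rw [hcomp, LinearMap.comp_apply]
            congr 1
            rw [hw, TensorProduct.map_tmul, hfix]
            simp
          rw [hS, Submodule.mem_comap, hLapp, hCgw]
          exact gen k hdetk w
        | add c₁ c₂ hc₁ hc₂ =>
          have : (PiTensorProduct.tprod ℚ v) ⊗ₜ[ℚ] (c₁ + c₂)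
              = (PiTensorProduct.tprod ℚ v) ⊗ₜ[ℚ] c₁ + (PiTensorProduct.tprod ℚ v) ⊗ₜ[ℚ] c₂ :=
            TensorProduct.tmul_add _ c₁ c₂
          rw [this, TensorProduct.tmul_add]
          exact S.add_mem hc₁ hc₂
      | add a₁ a₂ ha₁ ha₂ =>
        have : m ⊗ₜ[ℚ] ((a₁ + a₂) ⊗ₜ[ℚ] c)
            = m ⊗ₜ[ℚ] (a₁ ⊗ₜ[ℚ] c) + m ⊗ₜ[ℚ] (a₂ ⊗ₜ[ℚ] c) := by
          rw [TensorProduct.add_tmul, TensorProduct.tmul_add]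
        rw [this]
        exact S.add_mem ha₁ ha₂

lemma relSigmaGL_le_relSigmaSL [FiniteDimensional ℚ V]
    (h : n₁ + n₂ < Module.finrank ℚ V) :
    relSigmaGL V M n₁ n₂ ρ ≤ relSigmaSL V M n₁ n₂ ρ := by
  rw [relSigmaGL, Submodule.span_le]
  rintro y ⟨σ, g, z, rfl⟩
  set A : (M ⊗[ℚ] MP(V, n₁, n₂)) →ₗ[ℚ] (M ⊗[ℚ] MP(V, n₁, n₂)) :=
    TensorProduct.map (ρ σ)
      ((glAct V n₁ n₂ (LinearEquiv.refl ℚ V)).comp (permAct V n₁ n₂ σ)) with hA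
  have h1 : z - A z ∈ relSigmaSL V M n₁ n₂ ρ := by
    apply Submodule.subset_span
    exact ⟨σ, LinearEquiv.refl ℚ V, z, by simp, rfl⟩
  have hsplit : TensorProduct.map (ρ σ) ((glAct V n₁ n₂ g).comp (permAct V n₁ n₂ σ)) z
      = TensorProduct.map LinearMap.id (glAct V n₁ n₂ g) (A z) := by
    rw [hA, glAct_one, LinearMap.id_comp, ← LinearMap.comp_apply, ← TensorProduct.map_comp,
      LinearMap.id_comp]
  rw [hsplit, ← sub_add_sub_cancel z (A z) _]
  exact add_mem h1 (sub_glAct_mem_relSigmaSL V n₁ n₂ M ρ h g (A z))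

end Aux

/-- for `n₁ + n₂ < dim V`, the canonical surjection
`W_{Σ × SL(V)} → W_{Σ × GL(V)}` between the coinvariant spaces of
`W = M ⊗ V^{⊗n₁} ⊗ (V*)^{⊗n₂}` is an isomorphism. -/
theorem stmt_11 (V : Type) [AddCommGroup V] [Module ℚ V] [FiniteDimensional ℚ V]
    (n₁ n₂ : ℕ) (h : n₁ + n₂ < Module.finrank ℚ V)
    (M : Type) [AddCommGroup M] [Module ℚ M]
    (ρ : Representation ℚ (Equiv.Perm (Fin n₁) × Equiv.Perm (Fin n₂)) M) :
    Function.Bijective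
      (Submodule.mapQ (relSigmaSL V M n₁ n₂ ρ) (relSigmaGL V M n₁ n₂ ρ) LinearMap.id
        (relSigmaSL_le_relSigmaGL V M n₁ n₂ ρ)) := by
  have heq : relSigmaGL V M n₁ n₂ ρ = relSigmaSL V M n₁ n₂ ρ :=
    le_antisymm (relSigmaGL_le_relSigmaSL V n₁ n₂ M ρ h)
      (le_trans (relSigmaSL_le_relSigmaGL V M n₁ n₂ ρ) (le_of_eq (Submodule.comap_id _)))
  constructor
  · intro a b hab
    obtain ⟨x, rfl⟩ := Submodule.Quotient.mk_surjective _ a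
    obtain ⟨y, rfl⟩ := Submodule.Quotient.mk_surjective _ b
    rw [Submodule.mapQ_apply, Submodule.mapQ_apply] at hab
    rw [Submodule.Quotient.eq] at hab ⊢
    simpa [heq] using hab
  · intro q
    obtain ⟨x, rfl⟩ := Submodule.Quotient.mk_surjective _ q
    exact ⟨Submodule.Quotient.mk x, by rw [Submodule.mapQ_apply]; rfl⟩
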